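/- Let n ≥ 1 and α ∈ ℝ. The matrix J̃_n(α) is dissipative (i.e. ⟨J̃_n(α)a, a⟩ ≤ 0 for all a ∈ ℝⁿ with the Euclidean inner product) if and only if α ≤ -cos(2π/(2n+1)). -/

import Mathlib

open Real Matrix

/-- The `n × n` upper bidiagonal matrix with diagonal entries `x`, except that the
`(n,n)` entry is `x - 1/2`, and `1` on the superdiagonal. -/
noncomputable def jordanBlockMod (n : ℕ) (x : ℝ) : Matrix (Fin n) (Fin n) ℝ :=
  Matrix.of fun i j =>
    if (j : ℕ) = (i : ℕ) then (if (i : ℕ) = n - 1 then x - 1 / 2 else x)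
    else if (j : ℕ) = (i : ℕ) + 1 then 1 else 0

namespace JordanBlockModAux

open Finset

lemma sin_rec (θ x : ℝ) :
    Real.sin (x * θ) + Real.sin ((x + 2) * θ) = 2 * Real.cos θ * Real.sin ((x + 1) * θ) := by
  have h1 : x * θ = (x + 1) * θ - θ := by ring
  have h2 : (x + 2) * θ = (x + 1) * θ + θ := by ring
  rw [h1, h2, Real.sin_sub, Real.sin_add]; ring

lemma sq_term (x y u v : ℝ) (hx : x ≠ 0) (hy : y ≠ 0) :
    1 / (2 * x * y) * (y * u - x * v) ^ 2
      = y / (2 * x) * u ^ 2 + x / (2 * y) * v ^ 2 - u * v := by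
  field_simp; ring

lemma sos_identity (m : ℕ) (co : ℝ) (s : ℕ → ℝ)
    (hs0 : s 0 = 0)
    (hpos : ∀ j, 1 ≤ j → j ≤ m + 1 → 0 < s j)
    (hrec : ∀ j, s j + s (j+2) = 2 * co * s (j+1))
    (hbd : s (m+2) = - s (m+1))
    (A : ℕ → ℝ) :
    co * ∑ i ∈ range (m+1), A i ^ 2 + A m ^ 2 / 2 - ∑ i ∈ range m, A i * A (i+1)
    = ∑ i ∈ range m, 1 / (2 * s (i+1) * s (i+2)) * (s (i+2) * A i - s (i+1) * A (i+1)) ^ 2 := by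
  set c : ℕ → ℝ := fun i => s (i+2) / (2 * s (i+1)) * A i ^ 2 with hc
  set e : ℕ → ℝ := fun j => s j / (2 * s (j+1)) * A j ^ 2 with he
  have step1 : ∀ i ∈ range m,
      1 / (2 * s (i+1) * s (i+2)) * (s (i+2) * A i - s (i+1) * A (i+1)) ^ 2
      = c i + e (i+1) - A i * A (i+1) := by
    intro i hi
    rw [mem_range] at hi
    have h1 : s (i+1) ≠ 0 := ne_of_gt (hpos _ (by omega) (by omega))
    have h2 : s (i+2) ≠ 0 := ne_of_gt (hpos _ (by omega) (by omega))
    have : c i + e (i+1) - A i * A (i+1)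
        = s (i+2) / (2 * s (i+1)) * A i ^ 2 + s (i+1) / (2 * s (i+2)) * A (i+1) ^ 2
          - A i * A (i+1) := by
      simp only [hc, he]
    rw [this, sq_term _ _ _ _ h1 h2]
  rw [Finset.sum_congr rfl step1, Finset.sum_sub_distrib, Finset.sum_add_distrib]
  have step3 : ∑ i ∈ range m, e (i+1) = ∑ i ∈ range (m+1), e i - e 0 := by
    rw [Finset.sum_range_succ' e m]; ring
  have step3' : ∑ i ∈ range m, c i = ∑ i ∈ range (m+1), c i - c m := by
    rw [Finset.sum_range_succ]; ring
  have he0 : e 0 = 0 := by simp [he, hs0]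
  have step4 : ∀ i ∈ range (m+1), c i + e i = co * A i ^ 2 := by
    intro i hi
    rw [mem_range] at hi
    have h1 : s (i+1) ≠ 0 := ne_of_gt (hpos _ (by omega) (by omega))
    have hr := hrec i
    simp only [hc, he]
    field_simp
    linear_combination A i ^ 2 * hr
  have step5 : c m = - A m ^ 2 / 2 := by
    have h1 : s (m+1) ≠ 0 := ne_of_gt (hpos _ (by omega) (by omega))
    simp only [hc]
    rw [hbd]
    field_simp
  have key : ∑ i ∈ range (m+1), (c i + e i) = co * ∑ i ∈ range (m+1), A i ^ 2 := by
    rw [Finset.sum_congr rfl step4, Finset.mul_sum]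
  rw [Finset.sum_add_distrib] at key
  rw [step3, step3', step5, he0]
  linarith [key]

lemma quad_eq (m : ℕ) (α : ℝ) (a : Fin (m+1) → ℝ) (A : ℕ → ℝ)
    (hA : ∀ i : Fin (m+1), A i = a i) (hA0 : ∀ i, m + 1 ≤ i → A i = 0) :
    (jordanBlockMod (m+1) α).mulVec a ⬝ᵥ a
      = α * ∑ i ∈ range (m+1), A i ^ 2 - A m ^ 2 / 2
        + ∑ i ∈ range m, A i * A (i+1) := by
  set G : ℕ → ℝ := fun k => (if k = m then α - 1/2 else α) * A k + A (k+1) with hG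
  simp only [dotProduct, Matrix.mulVec, jordanBlockMod, Matrix.of_apply,
    Nat.add_sub_cancel]
  have inner : ∀ i : Fin (m+1),
      (∑ j : Fin (m+1),
        (if (j:ℕ) = (i:ℕ) then if (i:ℕ) = m then α - 1/2 else α
         else if (j:ℕ) = (i:ℕ) + 1 then 1 else 0) * a j) = G (i:ℕ) := by
    intro i
    have hsplit : ∀ j : Fin (m+1),
        (if (j:ℕ) = (i:ℕ) then if (i:ℕ) = m then α - 1/2 else α
         else if (j:ℕ) = (i:ℕ) + 1 then 1 else 0) * a j
        = (if j = i then (if (i:ℕ) = m then α - 1/2 else α) * A (i:ℕ) else 0)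
          + (if (j:ℕ) = (i:ℕ)+1 then A (j:ℕ) else 0) := by
      intro j
      rw [← hA j]
      by_cases h1 : (j:ℕ) = (i:ℕ) <;> by_cases h2 : (j:ℕ) = (i:ℕ)+1
      · omega
      · have : j = i := Fin.ext h1
        simp [this, h2]
      · have : j ≠ i := fun h => h1 (by rw [h])
        simp [this, h1, h2]
      · have : j ≠ i := fun h => h1 (by rw [h])
        simp [this, h1, h2]
    rw [Finset.sum_congr rfl (fun j _ => hsplit j), Finset.sum_add_distrib,
      Finset.sum_ite_eq' univ i]
    simp only [Finset.mem_univ, if_true]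
    have h2nd : (∑ j : Fin (m+1), if (j:ℕ) = (i:ℕ)+1 then A (j:ℕ) else 0) = A ((i:ℕ)+1) := by
      by_cases hi : (i:ℕ) < m
      · have hval : ∀ j : Fin (m+1), ((j:ℕ) = (i:ℕ)+1) ↔ j = (⟨(i:ℕ)+1, by omega⟩ : Fin (m+1)) := by
          intro j; constructor
          · intro h; exact Fin.ext h
          · intro h; rw [h]
        calc (∑ j : Fin (m+1), if (j:ℕ) = (i:ℕ)+1 then A (j:ℕ) else 0)
            = ∑ j : Fin (m+1), if j = (⟨(i:ℕ)+1, by omega⟩ : Fin (m+1)) then A (j:ℕ) else 0 := by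
              apply Finset.sum_congr rfl; intro j _
              simp only [hval j]
          _ = A ((i:ℕ)+1) := by rw [Finset.sum_ite_eq' univ]; simp
      · have him : (i:ℕ) = m := by omega
        have : ∀ j : Fin (m+1), ((j:ℕ) = (i:ℕ)+1) = False := by
          intro j; simp only [eq_iff_iff, iff_false]; have := j.isLt; omega
        simp only [this, if_false, Finset.sum_const_zero]
        rw [hA0 _ (by omega)]
    rw [h2nd, hG]
  rw [Finset.sum_congr rfl (fun i _ => by rw [inner i, ← hA i])]
  rw [Fin.sum_univ_eq_sum_range (fun k => G k * A k) (m+1)]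
  have hterm : ∀ k, G k * A k
      = α * A k ^ 2 + (if k = m then -(A k ^ 2 / 2) else 0) + A (k+1) * A k := by
    intro k
    simp only [hG]
    split_ifs <;> ring
  rw [Finset.sum_congr rfl (fun k _ => hterm k), Finset.sum_add_distrib,
    Finset.sum_add_distrib, Finset.sum_ite_eq' (range (m+1)) m]
  simp only [Finset.mem_range, Nat.lt_succ_self, if_true]
  rw [Finset.sum_range_succ (fun k => A (k+1) * A k) m, hA0 (m+1) le_rfl]
  rw [← Finset.mul_sum]
  have : ∑ k ∈ range m, A (k+1) * A k = ∑ k ∈ range m, A k * A (k+1) := by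
    apply Finset.sum_congr rfl; intro k _; ring
  rw [this]
  simp only [Finset.mul_sum]
  ring

end JordanBlockModAux

open JordanBlockModAux Finset in
/-- `J̃_n(α)` is dissipative iff `α ≤ -cos(2π/(2n+1))`. -/
theorem jordanBlockMod_dissipative_iff (n : ℕ) (hn : 1 ≤ n) (α : ℝ) :
    (∀ a : Fin n → ℝ, (jordanBlockMod n α).mulVec a ⬝ᵥ a ≤ 0) ↔
      α ≤ -Real.cos (2 * π / (2 * n + 1)) := by
  obtain ⟨m, rfl⟩ : ∃ m, n = m + 1 := ⟨n - 1, by omega⟩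
  set θ : ℝ := 2 * π / (2 * ((m + 1 : ℕ) : ℝ) + 1) with hθ
  set s : ℕ → ℝ := fun j => Real.sin ((j : ℝ) * θ) with hsdef
  have hD : (0:ℝ) < 2 * ((m + 1 : ℕ) : ℝ) + 1 := by positivity
  have hθpos : 0 < θ := by
    rw [hθ]
    exact div_pos (by positivity) hD
  have hs0 : s 0 = 0 := by simp [hsdef]
  have hpos : ∀ j, 1 ≤ j → j ≤ m + 1 → 0 < s j := by
    intro j h1 h2
    apply Real.sin_pos_of_pos_of_lt_pi
    · have : (0:ℝ) < (j:ℝ) := by exact_mod_cast Nat.pos_of_ne_zero (by omega)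
      exact mul_pos this hθpos
    · have hj : (j:ℝ) ≤ (m:ℝ) + 1 := by exact_mod_cast h2
      have heq : (j:ℝ) * θ = ((j:ℝ) * (2 * π)) / (2 * ((m + 1 : ℕ) : ℝ) + 1) := by
        rw [hθ]; ring
      rw [heq, div_lt_iff₀ hD]
      push_cast
      nlinarith [Real.pi_pos, hj]
  have hrec : ∀ j : ℕ, s j + s (j+2) = 2 * Real.cos θ * s (j+1) := by
    intro j
    simp only [hsdef]
    push_cast
    exact sin_rec θ j
  have hbd : s (m+2) = - s (m+1) := by
    simp only [hsdef]
    have key : ((m+2:ℕ):ℝ) * θ = 2 * π - ((m+1:ℕ):ℝ) * θ := by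
      rw [hθ]
      field_simp
      push_cast
      ring
    rw [key, Real.sin_sub]
    simp [Real.sin_two_pi, Real.cos_two_pi]
  constructor
  · -- dissipative → α ≤ -cos θ
    intro h
    set A : ℕ → ℝ := fun j => if j < m + 1 then s (j+1) else 0 with hAdef
    have hq := h (fun i => A (i : ℕ))
    rw [quad_eq m α _ A (fun i => rfl) (fun i hi => by simp [hAdef, Nat.not_lt.mpr hi]; intro hle; omega)] at hq
    have id := sos_identity m (Real.cos θ) s hs0 hpos hrec hbd A
    have hzero : ∀ i ∈ range m,
        1 / (2 * s (i+1) * s (i+2)) * (s (i+2) * A i - s (i+1) * A (i+1)) ^ 2 = 0 := by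
      intro i hi
      rw [mem_range] at hi
      have h1 : A i = s (i+1) := by simp [hAdef]; omega
      have h2 : A (i+1) = s (i+2) := by simp [hAdef]; omega
      rw [h1, h2]
      ring
    rw [Finset.sum_congr rfl hzero, Finset.sum_const_zero] at id
    have hS : 0 < ∑ i ∈ range (m+1), A i ^ 2 := by
      apply Finset.sum_pos'
      · intro i _; positivity
      · refine ⟨0, Finset.mem_range.mpr (by omega), ?_⟩
        have : A 0 = s 1 := by simp [hAdef]
        rw [this]
        have := hpos 1 le_rfl (by omega)
        positivity
    nlinarith [hq, id, hS]
  · -- α ≤ -cos θ → dissipative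
    intro h a
    set A : ℕ → ℝ := fun j => if hj : j < m + 1 then a ⟨j, hj⟩ else 0 with hAdef
    have hA : ∀ i : Fin (m+1), A (i : ℕ) = a i := by
      intro i
      simp only [hAdef]
      rw [dif_pos i.isLt]
    have hA0 : ∀ i, m + 1 ≤ i → A i = 0 := by
      intro i hi
      simp only [hAdef]
      rw [dif_neg (by omega)]
    rw [quad_eq m α a A hA hA0]
    have id := sos_identity m (Real.cos θ) s hs0 hpos hrec hbd A
    have hsos : 0 ≤ ∑ i ∈ range m,
        1 / (2 * s (i+1) * s (i+2)) * (s (i+2) * A i - s (i+1) * A (i+1)) ^ 2 := by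
      apply Finset.sum_nonneg
      intro i hi
      rw [mem_range] at hi
      have h1 := hpos (i+1) (by omega) (by omega)
      have h2 := hpos (i+2) (by omega) (by omega)
      have : (0:ℝ) < 2 * s (i+1) * s (i+2) := by positivity
      exact mul_nonneg (le_of_lt (div_pos one_pos this)) (sq_nonneg _)
    have hS : 0 ≤ ∑ i ∈ range (m+1), A i ^ 2 :=
      Finset.sum_nonneg (fun i _ => sq_nonneg _)
    nlinarith [id, hsos, hS, mul_le_mul_of_nonneg_right h hS]
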